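/- Suppose the agents are indexed so that the oblivious agents are exactly the agents n'+1,…,n, where 0 ≤ n' < n, so that W has the block form W = [[W¹¹, W¹²],[0, W²²]] and Λ = [[Λ¹¹, 0],[0, I_{n−n'}]], with W¹¹, Λ¹¹ of size n'×n'. Then the FJ model x(k+1) = ΛW x(k) + (I_n − Λ)u is convergent (i.e., x(k) has a limit for every u) if and only if W²² is regular, i.e. W²²_* = lim_{k→∞}(W²²)^k exists. In this case, writing u = (u¹, u²), the limit opinion x' = lim_{k→∞} x(k) is given blockwise by x'¹ = (I − Λ¹¹W¹¹)^{-1}[(I − Λ¹¹)u¹ + Λ¹¹W¹²W²²_* u²] and x'² = W²²_* u². -/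

import Mathlib

open Matrix Filter Finset


lemma pow_entry_nonneg {n : ℕ} {A : Matrix (Fin n) (Fin n) ℝ}
    (hA0 : ∀ i j, 0 ≤ A i j) : ∀ k i j, 0 ≤ (A ^ k) i j := by
  intro k
  induction k with
  | zero =>
    intro i j
    rw [pow_zero, Matrix.one_apply]
    split <;> norm_num
  | succ k ih =>
    intro i j
    rw [pow_succ, Matrix.mul_apply]
    exact Finset.sum_nonneg fun l _ => mul_nonneg (ih i l) (hA0 l j)

lemma rowsum_succ {n : ℕ} (A : Matrix (Fin n) (Fin n) ℝ) (k : ℕ) (i : Fin n) :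
    ∑ j, (A ^ (k+1)) i j = ∑ l, (A ^ k) i l * ∑ j, A l j := by
  simp_rw [pow_succ, Matrix.mul_apply, Finset.mul_sum]
  rw [Finset.sum_comm]

lemma rowsum_le_one {n : ℕ} {A : Matrix (Fin n) (Fin n) ℝ}
    (hA0 : ∀ i j, 0 ≤ A i j) (hA1 : ∀ i, ∑ j, A i j ≤ 1) :
    ∀ k i, ∑ j, (A ^ k) i j ≤ 1 := by
  intro k
  induction k with
  | zero =>
    intro i
    simp [pow_zero, Matrix.one_apply]
  | succ k ih =>
    intro i
    rw [rowsum_succ]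
    calc ∑ l, (A ^ k) i l * ∑ j, A l j ≤ ∑ l, (A ^ k) i l * 1 :=
          Finset.sum_le_sum fun l _ =>
            mul_le_mul_of_nonneg_left (hA1 l) (pow_entry_nonneg hA0 k i l)
    _ = ∑ l, (A ^ k) i l := by simp
    _ ≤ 1 := ih i

lemma rowsum_anti {n : ℕ} {A : Matrix (Fin n) (Fin n) ℝ}
    (hA0 : ∀ i j, 0 ≤ A i j) (hA1 : ∀ i, ∑ j, A i j ≤ 1) {k m : ℕ} (hkm : k ≤ m) (i : Fin n) :
    ∑ j, (A ^ m) i j ≤ ∑ j, (A ^ k) i j := by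
  induction m, hkm using Nat.le_induction with
  | base => exact le_rfl
  | succ m hm ih =>
    calc ∑ j, (A ^ (m+1)) i j = ∑ l, (A ^ m) i l * ∑ j, A l j := rowsum_succ A m i
    _ ≤ ∑ l, (A ^ m) i l * 1 := Finset.sum_le_sum fun l _ =>
          mul_le_mul_of_nonneg_left (hA1 l) (pow_entry_nonneg hA0 m i l)
    _ = ∑ l, (A ^ m) i l := by simp
    _ ≤ _ := ih

lemma walk_pow_pos {n : ℕ} {A : Matrix (Fin n) (Fin n) ℝ}
    (hA0 : ∀ i j, 0 ≤ A i j) {i d : Fin n}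
    (h : Relation.ReflTransGen (fun a b => 0 < A a b) i d) :
    ∃ L, 0 < (A ^ L) i d := by
  induction h with
  | refl => exact ⟨0, by simp [Matrix.one_apply]⟩
  | tail hcd hedge ih =>
    obtain ⟨L, hL⟩ := ih
    rename_i c d'
    refine ⟨L + 1, ?_⟩
    rw [pow_succ, Matrix.mul_apply]
    exact Finset.sum_pos' (fun l _ => mul_nonneg (pow_entry_nonneg hA0 L i l) (hA0 l d'))
      ⟨c, Finset.mem_univ c, mul_pos hL hedge⟩

/-- basic mulVec sup-norm bound via row sums -/
lemma mulVec_norm_le {n m : ℕ} {B : Matrix (Fin n) (Fin m) ℝ}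
    (hB0 : ∀ i j, 0 ≤ B i j) {c : ℝ} (hc : 0 ≤ c) (hr : ∀ i, ∑ j, B i j ≤ c)
    (v : Fin m → ℝ) : ‖B *ᵥ v‖ ≤ c * ‖v‖ := by
  rw [pi_norm_le_iff_of_nonneg (by positivity)]
  intro i
  calc ‖(B *ᵥ v) i‖ = |∑ j, B i j * v j| := rfl
  _ ≤ ∑ j, |B i j * v j| := Finset.abs_sum_le_sum_abs _ _
  _ = ∑ j, B i j * |v j| := by
      refine Finset.sum_congr rfl fun j _ => ?_
      rw [abs_mul, abs_of_nonneg (hB0 i j)]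
  _ ≤ ∑ j, B i j * ‖v‖ := Finset.sum_le_sum fun j _ =>
      mul_le_mul_of_nonneg_left (norm_le_pi_norm v j) (hB0 i j)
  _ = (∑ j, B i j) * ‖v‖ := by rw [Finset.sum_mul]
  _ ≤ c * ‖v‖ := mul_le_mul_of_nonneg_right (hr i) (norm_nonneg v)

lemma substochastic_bound {n : ℕ} (A : Matrix (Fin n) (Fin n) ℝ)
    (hA0 : ∀ i j, 0 ≤ A i j) (hA1 : ∀ i, ∑ j, A i j ≤ 1)
    (hreach : ∀ i, ∃ d, Relation.ReflTransGen (fun a b => 0 < A a b) i d ∧ ∑ j, A d j < 1) :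
    ∃ g : ℕ → ℝ, (∀ k, 0 ≤ g k) ∧ Summable g ∧
      ∀ k (v : Fin n → ℝ), ‖(A ^ k) *ᵥ v‖ ≤ g k * ‖v‖ := by
  rcases Nat.eq_zero_or_pos n with hn | hn
  · subst hn
    refine ⟨fun _ => 0, fun _ => le_rfl, summable_zero, fun k v => ?_⟩
    have : (A ^ k) *ᵥ v = 0 := Subsingleton.elim _ _
    simp [this]
  · -- choose walks to deficient nodes
    haveI : Nonempty (Fin n) := ⟨⟨0, hn⟩⟩
    have hne : (Finset.univ : Finset (Fin n)).Nonempty := Finset.univ_nonempty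
    choose dd hwalk hdef using hreach
    choose L hL using fun i => walk_pow_pos hA0 (hwalk i)
    set m : ℕ := Finset.univ.sup (fun i => L i + 1) with hm
    -- each row sum of A^m is < 1
    have hrow : ∀ i, ∑ j, (A ^ m) i j < 1 := by
      intro i
      have h1 : ∑ j, (A ^ m) i j ≤ ∑ j, (A ^ (L i + 1)) i j :=
        rowsum_anti hA0 hA1 (Finset.le_sup (Finset.mem_univ i)) i
      refine lt_of_le_of_lt h1 ?_
      rw [rowsum_succ]
      calc ∑ l, (A ^ (L i)) i l * ∑ j, A l j < ∑ l, (A ^ (L i)) i l * 1 := by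
            refine Finset.sum_lt_sum (fun l _ =>
              mul_le_mul_of_nonneg_left (hA1 l) (pow_entry_nonneg hA0 _ i l)) ?_
            exact ⟨dd i, Finset.mem_univ _, by
              exact mul_lt_mul_of_pos_left (hdef i) (hL i)⟩
      _ = ∑ l, (A ^ (L i)) i l := by simp
      _ ≤ 1 := rowsum_le_one hA0 hA1 _ i
    set c : ℝ := Finset.univ.sup' hne (fun i => ∑ j, (A ^ m) i j) with hcdef
    have hc1 : c < 1 := by
      rw [hcdef, Finset.sup'_lt_iff]
      exact fun i _ => hrow i
    have hc0 : 0 ≤ c := by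
      obtain ⟨i0, _⟩ := hne
      rw [hcdef]
      exact le_trans (Finset.sum_nonneg fun j _ => pow_entry_nonneg hA0 m i0 j)
        (Finset.le_sup' (fun i => ∑ j, (A ^ m) i j) (Finset.mem_univ i0))
    have hcle : ∀ i, ∑ j, (A ^ m) i j ≤ c := by
      intro i
      rw [hcdef]
      exact Finset.le_sup' (fun i => ∑ j, (A ^ m) i j) (Finset.mem_univ i)
    have hm1 : 1 ≤ m := by
      obtain ⟨i0, _⟩ := hne
      calc 1 ≤ L i0 + 1 := Nat.le_add_left 1 _
      _ ≤ m := Finset.le_sup (f := fun i => L i + 1) (Finset.mem_univ i0)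
    -- norm bounds
    have hbnd1 : ∀ k (v : Fin n → ℝ), ‖(A ^ k) *ᵥ v‖ ≤ ‖v‖ := by
      intro k v
      simpa using mulVec_norm_le (pow_entry_nonneg hA0 k) zero_le_one (rowsum_le_one hA0 hA1 k) v
    have hbndm : ∀ (v : Fin n → ℝ), ‖(A ^ m) *ᵥ v‖ ≤ c * ‖v‖ :=
      mulVec_norm_le (pow_entry_nonneg hA0 m) hc0 hcle
    have hq : ∀ q (v : Fin n → ℝ), ‖(A ^ (m * q)) *ᵥ v‖ ≤ c ^ q * ‖v‖ := by
      intro q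
      induction q with
      | zero => intro v; simp [Matrix.one_mulVec]
      | succ q ih =>
        intro v
        have : A ^ (m * (q + 1)) = A ^ (m * q) * A ^ m := by
          rw [← pow_add, Nat.mul_succ]
        rw [this, ← Matrix.mulVec_mulVec]
        calc ‖(A ^ (m * q)) *ᵥ ((A ^ m) *ᵥ v)‖ ≤ c ^ q * ‖(A ^ m) *ᵥ v‖ := ih _
        _ ≤ c ^ q * (c * ‖v‖) := by
            exact mul_le_mul_of_nonneg_left (hbndm v) (by positivity)
        _ = c ^ (q + 1) * ‖v‖ := by ring
    refine ⟨fun k => c ^ (k / m), fun k => by positivity, ?_, ?_⟩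
    · -- summability
      refine summable_of_sum_range_le (c := (m : ℝ) * ∑' q, c ^ q) (fun k => by positivity) ?_
      intro N
      have hsub : ∑ k ∈ Finset.range N, c ^ (k / m) ≤ ∑ k ∈ Finset.range (m * N), c ^ (k / m) := by
        refine Finset.sum_le_sum_of_subset_of_nonneg ?_ (fun k _ _ => by positivity)
        exact Finset.range_subset_range.mpr (Nat.le_mul_of_pos_left N (by omega))
      have key : ∀ N : ℕ, ∑ k ∈ Finset.range (m * N), c ^ (k / m)
          = (m : ℝ) * ∑ q ∈ Finset.range N, c ^ q := by
        intro N
        induction N with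
        | zero => simp
        | succ N ih =>
          rw [Nat.mul_succ, Finset.sum_range_add, ih, Finset.sum_range_succ]
          have : ∀ s ∈ Finset.range m, c ^ ((m * N + s) / m) = c ^ N := by
            intro s hs
            rw [Finset.mem_range] at hs
            congr 1
            rw [add_comm, Nat.add_mul_div_left s N (by omega), Nat.div_eq_of_lt hs, zero_add]
          rw [Finset.sum_congr rfl this, Finset.sum_const, Finset.card_range, nsmul_eq_mul]
          ring
      refine le_trans hsub ?_
      rw [key]
      have : ∑ q ∈ Finset.range N, c ^ q ≤ ∑' q, c ^ q :=
        Summable.sum_le_tsum _ (fun q _ => by positivity) (summable_geometric_of_lt_one hc0 hc1)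
      exact mul_le_mul_of_nonneg_left this (by positivity)
    · -- the bound
      intro k v
      have hdecomp : A ^ k = A ^ (m * (k / m)) * A ^ (k % m) := by
        rw [← pow_add]
        congr 1
        exact (Nat.div_add_mod k m).symm
      rw [hdecomp, ← Matrix.mulVec_mulVec]
      calc ‖(A ^ (m * (k / m))) *ᵥ ((A ^ (k % m)) *ᵥ v)‖
          ≤ c ^ (k / m) * ‖(A ^ (k % m)) *ᵥ v‖ := hq _ _
      _ ≤ c ^ (k / m) * ‖v‖ := mul_le_mul_of_nonneg_left (hbnd1 _ v) (by positivity)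


section
variable {n : ℕ} (A : Matrix (Fin n) (Fin n) ℝ) (g : ℕ → ℝ)

lemma geom_summable (hg : Summable g) (hb : ∀ k (v : Fin n → ℝ), ‖(A ^ k) *ᵥ v‖ ≤ g k * ‖v‖)
    (v : Fin n → ℝ) : Summable (fun k => (A ^ k) *ᵥ v) :=
  Summable.of_norm_bounded (g := fun k => g k * ‖v‖) (hg.mul_right _) (fun k => hb k v)

lemma geom_tendsto_zero (hg : Summable g)
    (hb : ∀ k (v : Fin n → ℝ), ‖(A ^ k) *ᵥ v‖ ≤ g k * ‖v‖) (v : Fin n → ℝ) :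
    Tendsto (fun k => (A ^ k) *ᵥ v) atTop (nhds 0) := by
  refine squeeze_zero_norm (fun k => hb k v) ?_
  have := (hg.tendsto_atTop_zero).mul_const ‖v‖
  simpa using this

lemma geom_telescope (hg : Summable g)
    (hb : ∀ k (v : Fin n → ℝ), ‖(A ^ k) *ᵥ v‖ ≤ g k * ‖v‖) (v : Fin n → ℝ) :
    (∑' k, ((A ^ k) *ᵥ v - (A ^ (k + 1)) *ᵥ v)) = v := by
  have hsum1 : Summable (fun k => (A ^ k) *ᵥ v) := geom_summable A g hg hb v
  have hsum2 : Summable (fun k => (A ^ (k + 1)) *ᵥ v) :=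
    (summable_nat_add_iff 1).mpr hsum1
  have hsum3 : Summable (fun k => (A ^ k) *ᵥ v - (A ^ (k + 1)) *ᵥ v) := hsum1.sub hsum2
  have h1 : Tendsto (fun N => ∑ i ∈ Finset.range N, ((A ^ i) *ᵥ v - (A ^ (i + 1)) *ᵥ v))
      atTop (nhds (∑' k, ((A ^ k) *ᵥ v - (A ^ (k + 1)) *ᵥ v))) :=
    hsum3.hasSum.tendsto_sum_nat
  have h2 : Tendsto (fun N => ∑ i ∈ Finset.range N, ((A ^ i) *ᵥ v - (A ^ (i + 1)) *ᵥ v))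
      atTop (nhds v) := by
    have heq : ∀ N, ∑ i ∈ Finset.range N, ((A ^ i) *ᵥ v - (A ^ (i + 1)) *ᵥ v)
        = v - (A ^ N) *ᵥ v := by
      intro N
      rw [Finset.sum_range_sub' (fun i => (A ^ i) *ᵥ v) N]
      simp [Matrix.one_mulVec]
    rw [tendsto_congr heq]
    have h3 := Tendsto.sub
      (tendsto_const_nhds : Tendsto (fun _ : ℕ => v) atTop (nhds v))
      (geom_tendsto_zero A g hg hb v)
    simpa using h3
  exact tendsto_nhds_unique h1 h2

lemma geom_entry_bound (hg0 : ∀ k, 0 ≤ g k)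
    (hb : ∀ k (v : Fin n → ℝ), ‖(A ^ k) *ᵥ v‖ ≤ g k * ‖v‖) (k : ℕ) (i j : Fin n) :
    |(A ^ k) i j| ≤ g k := by
  have h1 : (A ^ k) i j = ((A ^ k) *ᵥ Pi.single j 1) i := by
    rw [Matrix.mulVec_single]
    simp
  have h2 : ‖((A ^ k) *ᵥ Pi.single j 1) i‖ ≤ ‖(A ^ k) *ᵥ Pi.single j 1‖ :=
    norm_le_pi_norm _ i
  have h3 := hb k (Pi.single j 1)
  rw [Pi.norm_single] at h3
  simp only [norm_one, mul_one] at h3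
  rw [h1]
  exact le_trans h2 h3

lemma geom_inv (hg0 : ∀ k, 0 ≤ g k) (hg : Summable g)
    (hb : ∀ k (v : Fin n → ℝ), ‖(A ^ k) *ᵥ v‖ ≤ g k * ‖v‖) (v : Fin n → ℝ) :
    HasSum (fun k => (A ^ k) *ᵥ v) ((1 - A)⁻¹ *ᵥ v) := by
  set S : Matrix (Fin n) (Fin n) ℝ := Matrix.of (fun i j => ∑' k, (A ^ k) i j) with hSdef
  have hSv : ∀ w : Fin n → ℝ, S *ᵥ w = ∑' k, (A ^ k) *ᵥ w := by
    intro w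
    funext i
    have hsumentry : ∀ j, Summable (fun k => (A ^ k) i j * w j) := by
      intro j
      refine Summable.of_norm_bounded (g := fun k => g k * |w j|) (hg.mul_right _) (fun k => ?_)
      rw [Real.norm_eq_abs, abs_mul]
      exact mul_le_mul_of_nonneg_right (geom_entry_bound A g hg0 hb k i j) (abs_nonneg _)
    have lhs : (S *ᵥ w) i = ∑ j, (∑' k, (A ^ k) i j) * w j := rfl
    have rhs : (∑' k, (A ^ k) *ᵥ w) i = ∑' k, ((A ^ k) *ᵥ w) i := by
      rw [tsum_apply (geom_summable A g hg hb w)]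
    rw [lhs, rhs]
    calc ∑ j, (∑' k, (A ^ k) i j) * w j = ∑ j, ∑' k, ((A ^ k) i j * w j) := by
          refine Finset.sum_congr rfl fun j _ => ?_
          rw [tsum_mul_right]
    _ = ∑' k, ∑ j, ((A ^ k) i j * w j) :=
          (Summable.tsum_finsetSum (fun j _ => hsumentry j)).symm
    _ = ∑' k, ((A ^ k) *ᵥ w) i := rfl
  have hrinv : (1 - A) * S = 1 := by
    have h1 : ∀ w : Fin n → ℝ, ((1 - A) * S) *ᵥ w = w := by
      intro w
      rw [← Matrix.mulVec_mulVec, hSv]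
      have T : (Fin n → ℝ) →L[ℝ] (Fin n → ℝ) :=
        LinearMap.toContinuousLinearMap (Matrix.mulVecLin (1 - A))
      have hmap : (1 - A) *ᵥ (∑' k, (A ^ k) *ᵥ w) = ∑' k, ((1 - A) *ᵥ ((A ^ k) *ᵥ w)) := by
        have := (LinearMap.toContinuousLinearMap (Matrix.mulVecLin (1 - A))).map_tsum
          (geom_summable A g hg hb w)
        exact this
      rw [hmap]
      have heq : ∀ k, (1 - A) *ᵥ ((A ^ k) *ᵥ w) = (A ^ k) *ᵥ w - (A ^ (k + 1)) *ᵥ w := by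
        intro k
        rw [Matrix.sub_mulVec, Matrix.one_mulVec, Matrix.mulVec_mulVec, ← pow_succ']
      simp_rw [heq]
      exact geom_telescope A g hg hb w
    ext i j
    have h2 := congrFun (h1 (Pi.single j 1)) i
    rw [Matrix.mulVec_single] at h2
    simp only [Pi.smul_apply, MulOpposite.op_one, one_smul, Matrix.col_apply] at h2
    rw [h2, Matrix.one_apply, Pi.single_apply]
  have hinv : (1 - A)⁻¹ = S := Matrix.inv_eq_right_inv hrinv
  rw [hinv, hSv]
  exact (geom_summable A g hg hb v).hasSum

lemma conv_tendsto (hg0 : ∀ k, 0 ≤ g k) (hg : Summable g)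
    (hb : ∀ k (v : Fin n → ℝ), ‖(A ^ k) *ᵥ v‖ ≤ g k * ‖v‖)
    (d : ℕ → Fin n → ℝ) (dl : Fin n → ℝ) (hd : Tendsto d atTop (nhds dl)) :
    Tendsto (fun k => ∑ t ∈ Finset.range k, (A ^ (k - 1 - t)) *ᵥ d t) atTop
      (nhds (∑' i, (A ^ i) *ᵥ dl)) := by
  -- bound on d
  obtain ⟨S0, hS0⟩ := hd.norm.bddAbove_range
  set S : ℝ := max S0 0 with hS
  have hdS : ∀ j, ‖d j‖ ≤ S := fun j =>
    le_trans (hS0 (Set.mem_range_self j)) (le_max_left _ _)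
  have hS0' : 0 ≤ S := le_max_right _ _
  set F : ℕ → ℕ → (Fin n → ℝ) :=
    fun k i => if i < k then (A ^ i) *ᵥ d (k - 1 - i) else 0 with hF
  have step1 : ∀ k, ∑' i, F k i = ∑ t ∈ Finset.range k, (A ^ (k - 1 - t)) *ᵥ d t := by
    intro k
    have h1 : ∑' i, F k i = ∑ i ∈ Finset.range k, F k i := by
      refine tsum_eq_sum (fun i hi => ?_)
      rw [Finset.mem_range] at hi
      exact if_neg hi
    rw [h1]
    have h2 : ∑ i ∈ Finset.range k, F k i
        = ∑ i ∈ Finset.range k, (A ^ i) *ᵥ d (k - 1 - i) := by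
      refine Finset.sum_congr rfl fun i hi => ?_
      rw [Finset.mem_range] at hi
      exact if_pos hi
    rw [h2]
    rw [← Finset.sum_range_reflect (fun i => (A ^ i) *ᵥ d (k - 1 - i)) k]
    refine Finset.sum_congr rfl fun t ht => ?_
    rw [Finset.mem_range] at ht
    have ht' : k - 1 - (k - 1 - t) = t := by omega
    rw [ht']
  have step2 : Tendsto (fun k => ∑' i, F k i) atTop (nhds (∑' i, (A ^ i) *ᵥ dl)) := by
    refine tendsto_tsum_of_dominated_convergence (bound := fun i => g i * S)
      (hg.mul_right S) (fun i => ?_) ?_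
    · -- pointwise limit
      have hinner : Tendsto (fun k => d (k - 1 - i)) atTop (nhds dl) := by
        refine hd.comp ?_
        simpa [Nat.sub_sub] using tendsto_sub_atTop_nat (1 + i)
      have hcont : Continuous fun v : Fin n → ℝ => (A ^ i) *ᵥ v :=
        continuous_const.matrix_mulVec continuous_id
      have h1 : Tendsto (fun k => (A ^ i) *ᵥ d (k - 1 - i)) atTop (nhds ((A ^ i) *ᵥ dl)) :=
        (hcont.tendsto dl).comp hinner
      refine h1.congr' ?_
      filter_upwards [eventually_ge_atTop (i + 1)] with k hk
      exact (if_pos (by omega)).symm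
    · refine Filter.Eventually.of_forall fun k i => ?_
      by_cases hik : i < k
      · rw [hF]
        simp only [if_pos hik]
        exact le_trans (hb i _) (mul_le_mul_of_nonneg_left (hdS _) (hg0 i))
      · rw [hF]
        simp only [if_neg hik, norm_zero]
        exact mul_nonneg (hg0 i) hS0'
  exact step2.congr (fun k => step1 k)

end


section FJ
variable {n₁ n₂ : ℕ} (W11 : Matrix (Fin n₁) (Fin n₁) ℝ) (W12 : Matrix (Fin n₁) (Fin n₂) ℝ)
  (W22 : Matrix (Fin n₂) (Fin n₂) ℝ) (lam1 : Fin n₁ → ℝ)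

noncomputable def fjmap (u x : Fin n₁ ⊕ Fin n₂ → ℝ) : Fin n₁ ⊕ Fin n₂ → ℝ :=
  (Matrix.diagonal (Sum.elim lam1 fun _ => 1) * Matrix.fromBlocks W11 W12 0 W22) *ᵥ x
    + (1 - Matrix.diagonal (Sum.elim lam1 fun _ => 1)) *ᵥ u

def fjc1 (u : Fin n₁ ⊕ Fin n₂ → ℝ) : Fin n₁ → ℝ := fun i => (1 - lam1 i) * u (Sum.inl i)

lemma fjmap_eq (u x : Fin n₁ ⊕ Fin n₂ → ℝ) :
    fjmap W11 W12 W22 lam1 u x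
      = Sum.elim
        ((Matrix.diagonal lam1 * W11) *ᵥ (fun i => x (Sum.inl i))
          + (Matrix.diagonal lam1 * W12) *ᵥ (fun j => x (Sum.inr j)) + fjc1 lam1 u)
        (W22 *ᵥ (fun j => x (Sum.inr j))) := by
  have hdiag : (1 : Matrix (Fin n₁ ⊕ Fin n₂) (Fin n₁ ⊕ Fin n₂) ℝ)
      - Matrix.diagonal (Sum.elim lam1 fun _ => 1)
      = Matrix.diagonal (fun p => 1 - Sum.elim lam1 (fun _ => (1:ℝ)) p) := by
    rw [← Matrix.diagonal_one, Matrix.diagonal_sub]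
  funext p
  rw [fjmap, ← Matrix.mulVec_mulVec, hdiag]
  cases p with
  | inl i =>
    simp only [Pi.add_apply, Matrix.mulVec_diagonal, Sum.elim_inl]
    have h1 : (Matrix.fromBlocks W11 W12 0 W22 *ᵥ x) (Sum.inl i)
        = ∑ i', W11 i i' * x (Sum.inl i') + ∑ j, W12 i j * x (Sum.inr j) := by
      simp [Matrix.mulVec, dotProduct, Fintype.sum_sum_type]
    have h2 : ((Matrix.diagonal lam1 * W11) *ᵥ fun i' => x (Sum.inl i')) i
        = ∑ i', lam1 i * W11 i i' * x (Sum.inl i') := by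
      simp [Matrix.mulVec, dotProduct, Matrix.diagonal_mul]
    have h3 : ((Matrix.diagonal lam1 * W12) *ᵥ fun j => x (Sum.inr j)) i
        = ∑ j, lam1 i * W12 i j * x (Sum.inr j) := by
      simp [Matrix.mulVec, dotProduct, Matrix.diagonal_mul]
    simp only [Sum.elim_inl, Pi.add_apply, h1, h2, h3, fjc1, mul_add, Finset.mul_sum, mul_assoc]
  | inr j =>
    simp only [Pi.add_apply, Matrix.mulVec_diagonal, Sum.elim_inr, one_mul, sub_self, zero_mul,
      add_zero]
    have h1 : (Matrix.fromBlocks W11 W12 0 W22 *ᵥ x) (Sum.inr j)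
        = ∑ j', W22 j j' * x (Sum.inr j') := by
      simp [Matrix.mulVec, dotProduct, Fintype.sum_sum_type]
    rw [h1]
    simp [Matrix.mulVec, dotProduct]

lemma fjiter2 (u : Fin n₁ ⊕ Fin n₂ → ℝ) (k : ℕ) :
    (fun j => (fjmap W11 W12 W22 lam1 u)^[k] u (Sum.inr j))
      = (W22 ^ k) *ᵥ (fun j => u (Sum.inr j)) := by
  induction k with
  | zero => simp [Matrix.one_mulVec]
  | succ k ih =>
    rw [Function.iterate_succ_apply']
    funext j
    have h1 := congrFun (fjmap_eq W11 W12 W22 lam1 u ((fjmap W11 W12 W22 lam1 u)^[k] u)) (Sum.inr j)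
    rw [h1]
    simp only [Sum.elim_inr]
    rw [show (fun j' => (fjmap W11 W12 W22 lam1 u)^[k] u (Sum.inr j')) = _ from ih,
      Matrix.mulVec_mulVec, ← pow_succ']

lemma fjiter1 (u : Fin n₁ ⊕ Fin n₂ → ℝ) (k : ℕ) :
    (fun i => (fjmap W11 W12 W22 lam1 u)^[k] u (Sum.inl i))
      = ((Matrix.diagonal lam1 * W11) ^ k) *ᵥ (fun i => u (Sum.inl i))
        + ∑ t ∈ Finset.range k, ((Matrix.diagonal lam1 * W11) ^ (k - 1 - t)) *ᵥ
            ((Matrix.diagonal lam1 * W12) *ᵥ ((W22 ^ t) *ᵥ (fun j => u (Sum.inr j)))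
              + fjc1 lam1 u) := by
  set A := Matrix.diagonal lam1 * W11 with hA
  set B := Matrix.diagonal lam1 * W12 with hB
  set dd : ℕ → Fin n₁ → ℝ :=
    fun t => B *ᵥ ((W22 ^ t) *ᵥ (fun j => u (Sum.inr j))) + fjc1 lam1 u with hdd
  induction k with
  | zero => simp [Matrix.one_mulVec]
  | succ k ih =>
    rw [Function.iterate_succ_apply']
    funext i
    have h1 := congrFun (fjmap_eq W11 W12 W22 lam1 u ((fjmap W11 W12 W22 lam1 u)^[k] u)) (Sum.inl i)
    rw [h1]
    simp only [Sum.elim_inl]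
    rw [show (fun i' => (fjmap W11 W12 W22 lam1 u)^[k] u (Sum.inl i')) = _ from ih,
      show (fun j' => (fjmap W11 W12 W22 lam1 u)^[k] u (Sum.inr j')) = _ from
        fjiter2 W11 W12 W22 lam1 u k]
    -- now a pure vector identity
    have key : A *ᵥ ((A ^ k) *ᵥ (fun i => u (Sum.inl i))
          + ∑ t ∈ Finset.range k, (A ^ (k - 1 - t)) *ᵥ dd t)
        + B *ᵥ ((W22 ^ k) *ᵥ (fun j => u (Sum.inr j))) + fjc1 lam1 u
        = (A ^ (k + 1)) *ᵥ (fun i => u (Sum.inl i))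
          + ∑ t ∈ Finset.range (k + 1), (A ^ (k + 1 - 1 - t)) *ᵥ dd t := by
      rw [Matrix.mulVec_add, Matrix.mulVec_mulVec, ← pow_succ']
      have hsum : A *ᵥ (∑ t ∈ Finset.range k, (A ^ (k - 1 - t)) *ᵥ dd t)
          = ∑ t ∈ Finset.range k, (A ^ (k - t)) *ᵥ dd t := by
        have hmap := map_sum (Matrix.mulVecLin A)
          (fun t => (A ^ (k - 1 - t)) *ᵥ dd t) (Finset.range k)
        simp only [Matrix.mulVecLin_apply] at hmap
        rw [hmap]
        refine Finset.sum_congr rfl fun t ht => ?_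
        rw [Finset.mem_range] at ht
        rw [Matrix.mulVec_mulVec, ← pow_succ']
        have he : k - 1 - t + 1 = k - t := by omega
        rw [he]
      rw [hsum]
      have hlast : ∑ t ∈ Finset.range (k + 1), (A ^ (k + 1 - 1 - t)) *ᵥ dd t
          = ∑ t ∈ Finset.range k, (A ^ (k - t)) *ᵥ dd t + dd k := by
        have e1 : ∀ t ∈ Finset.range k, (A ^ (k + 1 - 1 - t)) *ᵥ dd t
            = (A ^ (k - t)) *ᵥ dd t := by
          intro t ht
          rw [Finset.mem_range] at ht
          have he : k + 1 - 1 - t = k - t := by omega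
          rw [he]
        rw [Finset.sum_range_succ, Finset.sum_congr rfl e1]
        have he : k + 1 - 1 - k = 0 := by omega
        rw [he, pow_zero, Matrix.one_mulVec]
      rw [hlast, hdd]
      simp only [add_assoc]
    exact congrFun key i

end FJ

/-- with oblivious agents exactly those in the second block (indices n'+1..n),
so that W = [[W¹¹,W¹²],[0,W²²]] and Λ = [[Λ¹¹,0],[0,I]], the FJ model is convergent iff
W²² is regular, in which case x(k) → x' with
x'¹ = (I-Λ¹¹W¹¹)⁻¹[(I-Λ¹¹)u¹ + Λ¹¹W¹²W²²_* u²] and x'² = W²²_* u². -/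
theorem fj_oblivious_convergence {n₁ n₂ : ℕ} (hn₂ : 0 < n₂)
    (W11 : Matrix (Fin n₁) (Fin n₁) ℝ) (W12 : Matrix (Fin n₁) (Fin n₂) ℝ)
    (W22 : Matrix (Fin n₂) (Fin n₂) ℝ) (lam1 : Fin n₁ → ℝ)
    (W : Matrix (Fin n₁ ⊕ Fin n₂) (Fin n₁ ⊕ Fin n₂) ℝ)
    (hWblock : W = Matrix.fromBlocks W11 W12 0 W22)
    (lam : Fin n₁ ⊕ Fin n₂ → ℝ)
    (hlamblock : lam = Sum.elim lam1 (fun _ => 1))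
    (hW0 : ∀ i j, 0 ≤ W i j) (hW1 : ∀ i, ∑ j, W i j = 1)
    (hlam : ∀ i, 0 ≤ lam i ∧ lam i ≤ 1)
    -- the oblivious agents (neither stubborn nor connected by a walk to a stubborn agent)
    -- are exactly the agents of the second block:
    (hobl : ∀ i : Fin n₁ ⊕ Fin n₂,
      (¬ (lam i < 1 ∨ ∃ j, lam j < 1 ∧ Relation.TransGen (fun a b => 0 < W a b) i j)) ↔
        ∃ i₂ : Fin n₂, i = Sum.inr i₂) :
    -- convergence for every prejudice is equivalent to the regularity of W²²:
    ((∀ u : Fin n₁ ⊕ Fin n₂ → ℝ, ∃ L : Fin n₁ ⊕ Fin n₂ → ℝ,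
        Tendsto (fun k => (fun x => (Matrix.diagonal lam * W).mulVec x
            + (1 - Matrix.diagonal lam).mulVec u)^[k] u) atTop (nhds L)) ↔
      (∃ W22star : Matrix (Fin n₂) (Fin n₂) ℝ,
        Tendsto (fun k => W22 ^ k) atTop (nhds W22star))) ∧
    -- and in this case the limit opinion is given blockwise:
    (∀ W22star : Matrix (Fin n₂) (Fin n₂) ℝ,
      Tendsto (fun k => W22 ^ k) atTop (nhds W22star) →
      ∀ u : Fin n₁ ⊕ Fin n₂ → ℝ,
        Tendsto (fun k => (fun x => (Matrix.diagonal lam * W).mulVec x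
            + (1 - Matrix.diagonal lam).mulVec u)^[k] u) atTop
          (nhds (Sum.elim
            ((1 - Matrix.diagonal lam1 * W11)⁻¹.mulVec
              ((1 - Matrix.diagonal lam1).mulVec (fun i => u (Sum.inl i))
                + (Matrix.diagonal lam1 * W12 * W22star).mulVec (fun j => u (Sum.inr j))))
            (W22star.mulVec (fun j => u (Sum.inr j)))))) := by
  subst hWblock
  subst hlamblock
  -- abbreviations
  set A : Matrix (Fin n₁) (Fin n₁) ℝ := Matrix.diagonal lam1 * W11 with hA
  set B : Matrix (Fin n₁) (Fin n₂) ℝ := Matrix.diagonal lam1 * W12 with hBdef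
  -- basic entry facts
  have hlam1_0 : ∀ i, 0 ≤ lam1 i := fun i => (hlam (Sum.inl i)).1
  have hlam1_1 : ∀ i, lam1 i ≤ 1 := fun i => (hlam (Sum.inl i)).2
  have hW11_0 : ∀ i j, 0 ≤ W11 i j := fun i j => by
    simpa [Matrix.fromBlocks_apply₁₁] using hW0 (Sum.inl i) (Sum.inl j)
  have hW12_0 : ∀ i j, 0 ≤ W12 i j := fun i j => by
    simpa [Matrix.fromBlocks_apply₁₂] using hW0 (Sum.inl i) (Sum.inr j)
  have hrow1 : ∀ i, ∑ j, W11 i j + ∑ j, W12 i j = 1 := by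
    intro i
    have := hW1 (Sum.inl i)
    rwa [Fintype.sum_sum_type] at this
  have hW11row : ∀ i, ∑ j, W11 i j ≤ 1 := by
    intro i
    have h2 : 0 ≤ ∑ j, W12 i j := Finset.sum_nonneg fun j _ => hW12_0 i j
    linarith [hrow1 i]
  have hA0 : ∀ i j, 0 ≤ A i j := fun i j => by
    rw [hA, Matrix.diagonal_mul]
    exact mul_nonneg (hlam1_0 i) (hW11_0 i j)
  have hArowsum : ∀ i, ∑ j, A i j = lam1 i * ∑ j, W11 i j := by
    intro i
    rw [Finset.mul_sum]
    exact Finset.sum_congr rfl fun j _ => by rw [hA, Matrix.diagonal_mul]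
  have hArow : ∀ i, ∑ j, A i j ≤ 1 := by
    intro i
    rw [hArowsum]
    calc lam1 i * ∑ j, W11 i j ≤ 1 * 1 :=
      mul_le_mul (hlam1_1 i) (hW11row i) (Finset.sum_nonneg fun j _ => hW11_0 i j) zero_le_one
    _ = 1 := one_mul 1
  have hAdefic : ∀ i, lam1 i < 1 → ∑ j, A i j < 1 := by
    intro i hi
    rw [hArowsum]
    calc lam1 i * ∑ j, W11 i j ≤ lam1 i * 1 :=
      mul_le_mul_of_nonneg_left (hW11row i) (hlam1_0 i)
    _ = lam1 i := mul_one _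
    _ < 1 := hi
  -- walks from the second block stay in the second block
  have hstay2 : ∀ p q, Relation.TransGen
      (fun a b => 0 < Matrix.fromBlocks W11 W12 0 W22 a b) p q →
      ∀ a, p = Sum.inr a → ∃ b, q = Sum.inr b := by
    intro p q h
    induction h with
    | single h' =>
      intro a ha
      subst ha
      rename_i q'
      cases q' with
      | inl j =>
        exfalso
        rw [Matrix.fromBlocks_apply₂₁] at h'
        simp at h'
      | inr b => exact ⟨b, rfl⟩
    | tail h1 h2 ih =>
      intro a ha
      obtain ⟨b, hb⟩ := ih a ha
      subst hb
      rename_i q'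
      cases q' with
      | inl j =>
        exfalso
        rw [Matrix.fromBlocks_apply₂₁] at h2
        simp at h2
      | inr b' => exact ⟨b', rfl⟩
  -- walks between first-block agents project to W11-walks
  have hwalk11 : ∀ (j : Fin n₁) p, Relation.TransGen
      (fun a b => 0 < Matrix.fromBlocks W11 W12 0 W22 a b) p (Sum.inl j) →
      ∀ i, p = Sum.inl i → Relation.ReflTransGen (fun a b : Fin n₁ => 0 < W11 a b) i j := by
    intro j p h
    induction h using Relation.TransGen.head_induction_on with
    | single h' =>
      intro i hi
      subst hi
      rw [Matrix.fromBlocks_apply₁₁] at h'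
      exact Relation.ReflTransGen.single h'
    | head h' h ihh =>
      rename_i a c
      intro i hi
      subst hi
      cases c with
      | inr b =>
        exfalso
        obtain ⟨b', hb'⟩ := hstay2 _ _ h b rfl
        exact Sum.inl_ne_inr hb'
      | inl i' =>
        rw [Matrix.fromBlocks_apply₁₁] at h'
        exact Relation.ReflTransGen.head h' (ihh i' rfl)
  -- conversion of W11-walks into A-walks ending at deficient nodes
  have hconv : ∀ (d : Fin n₁), lam1 d < 1 → ∀ a,
      Relation.ReflTransGen (fun a b : Fin n₁ => 0 < W11 a b) a d →
      ∃ e, Relation.ReflTransGen (fun a b => 0 < A a b) a e ∧ ∑ j, A e j < 1 := by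
    intro d hd a h
    induction h using Relation.ReflTransGen.head_induction_on with
    | refl => exact ⟨d, Relation.ReflTransGen.refl, hAdefic d hd⟩
    | head h' h ihh =>
      rename_i a' c
      by_cases hla : lam1 a' < 1
      · exact ⟨a', Relation.ReflTransGen.refl, hAdefic a' hla⟩
      · obtain ⟨e, he1, he2⟩ := ihh
        have hpos : 0 < A a' c := by
          rw [hA, Matrix.diagonal_mul]
          exact mul_pos (lt_of_lt_of_le zero_lt_one (le_of_not_gt hla)) h'
        exact ⟨e, Relation.ReflTransGen.head hpos he1, he2⟩
  -- every first-block agent reaches a deficient node in the graph of A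
  have hreach : ∀ i : Fin n₁, ∃ d,
      Relation.ReflTransGen (fun a b => 0 < A a b) i d ∧ ∑ j, A d j < 1 := by
    intro i
    have h1 : ¬ ∃ i₂ : Fin n₂, (Sum.inl i : Fin n₁ ⊕ Fin n₂) = Sum.inr i₂ := by
      rintro ⟨i₂, h⟩
      exact Sum.inl_ne_inr h
    have h2 := not_not.mp (fun hc => h1 ((hobl (Sum.inl i)).mp hc))
    cases h2 with
    | inl h => exact ⟨i, Relation.ReflTransGen.refl, hAdefic i (by simpa using h)⟩
    | inr h =>
      obtain ⟨j, hj1, hj2⟩ := h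
      cases j with
      | inr j₂ => simp at hj1
      | inl j₁ =>
        simp only [Sum.elim_inl] at hj1
        exact hconv j₁ hj1 i (hwalk11 j₁ _ hj2 i rfl)
  -- the geometric bound for A
  obtain ⟨g, hg0, hg, hb⟩ := substochastic_bound A hA0 hArow hreach
  -- part 2: the limit formula
  have part2 : ∀ W22star : Matrix (Fin n₂) (Fin n₂) ℝ,
      Tendsto (fun k => W22 ^ k) atTop (nhds W22star) →
      ∀ u : Fin n₁ ⊕ Fin n₂ → ℝ,
        Tendsto (fun k => (fjmap W11 W12 W22 lam1 u)^[k] u) atTop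
          (nhds (Sum.elim
            ((1 - A)⁻¹ *ᵥ ((1 - Matrix.diagonal lam1) *ᵥ (fun i => u (Sum.inl i))
                + (B * W22star) *ᵥ (fun j => u (Sum.inr j))))
            (W22star *ᵥ (fun j => u (Sum.inr j))))) := by
    intro W22star hWs u
    set u1 : Fin n₁ → ℝ := fun i => u (Sum.inl i) with hu1
    set u2 : Fin n₂ → ℝ := fun j => u (Sum.inr j) with hu2
    have hx2tend : Tendsto (fun k => (W22 ^ k) *ᵥ u2) atTop (nhds (W22star *ᵥ u2)) := by
      have hcont : Continuous fun X : Matrix (Fin n₂) (Fin n₂) ℝ => X *ᵥ u2 :=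
        continuous_id.matrix_mulVec continuous_const
      exact (hcont.tendsto W22star).comp hWs
    set dl : Fin n₁ → ℝ := B *ᵥ (W22star *ᵥ u2) + fjc1 lam1 u with hdl
    have hdtend : Tendsto (fun t => B *ᵥ ((W22 ^ t) *ᵥ u2) + fjc1 lam1 u) atTop (nhds dl) := by
      have hcont : Continuous fun v : Fin n₂ → ℝ => B *ᵥ v :=
        continuous_const.matrix_mulVec continuous_id
      exact ((hcont.tendsto _).comp hx2tend).add tendsto_const_nhds
    have hconv1 : Tendsto (fun k => (fun i => (fjmap W11 W12 W22 lam1 u)^[k] u (Sum.inl i)))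
        atTop (nhds ((1 - A)⁻¹ *ᵥ dl)) := by
      have h1 : Tendsto (fun k => (A ^ k) *ᵥ u1
          + ∑ t ∈ Finset.range k, (A ^ (k - 1 - t)) *ᵥ (B *ᵥ ((W22 ^ t) *ᵥ u2) + fjc1 lam1 u))
          atTop (nhds (0 + ∑' i, (A ^ i) *ᵥ dl)) :=
        (geom_tendsto_zero A g hg hb u1).add
          (conv_tendsto A g hg0 hg hb _ dl hdtend)
      rw [zero_add, (geom_inv A g hg0 hg hb dl).tsum_eq] at h1
      refine h1.congr fun k => ?_
      exact (fjiter1 W11 W12 W22 lam1 u k).symm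
    have hc1eq : fjc1 lam1 u = (1 - Matrix.diagonal lam1) *ᵥ u1 := by
      funext i
      rw [show (1 : Matrix (Fin n₁) (Fin n₁) ℝ) - Matrix.diagonal lam1
        = Matrix.diagonal (fun i => 1 - lam1 i) from by
          rw [← Matrix.diagonal_one, Matrix.diagonal_sub],
        Matrix.mulVec_diagonal]
      rfl
    have hdl2 : (1 - Matrix.diagonal lam1) *ᵥ u1 + (B * W22star) *ᵥ u2 = dl := by
      rw [hdl, ← Matrix.mulVec_mulVec, hc1eq, add_comm]
    rw [tendsto_pi_nhds]
    intro p
    cases p with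
    | inl i =>
      simp only [Sum.elim_inl, hdl2]
      exact tendsto_pi_nhds.mp hconv1 i
    | inr j =>
      simp only [Sum.elim_inr]
      have h2 : Tendsto (fun k => ((W22 ^ k) *ᵥ u2) j) atTop (nhds ((W22star *ᵥ u2) j)) :=
        tendsto_pi_nhds.mp hx2tend j
      refine h2.congr fun k => ?_
      exact (congrFun (fjiter2 W11 W12 W22 lam1 u k) j).symm
  constructor
  · constructor
    · -- convergence for all u implies regularity of W22
      intro H
      choose L hL using H
      refine ⟨Matrix.of (fun i j => L (Sum.elim 0 (Pi.single j 1)) (Sum.inr i)), ?_⟩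
      refine tendsto_pi_nhds.mpr ?_
      intro i
      rw [tendsto_pi_nhds]
      intro j
      have h1 := tendsto_pi_nhds.mp (hL (Sum.elim 0 (Pi.single j 1))) (Sum.inr i)
      refine Tendsto.congr (fun k => ?_) h1
      show (fjmap W11 W12 W22 lam1 (Sum.elim 0 (Pi.single j 1)))^[k]
        (Sum.elim 0 (Pi.single j 1)) (Sum.inr i) = (W22 ^ k) i j
      have h2 := congrFun (fjiter2 W11 W12 W22 lam1 (Sum.elim 0 (Pi.single j 1)) k) i
      rw [h2]
      rw [show (fun j' => Sum.elim (0 : Fin n₁ → ℝ) (Pi.single j 1) (Sum.inr j'))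
        = Pi.single j 1 from rfl]
      simp [Matrix.mulVec_single]
    · rintro ⟨W22star, hWs⟩ u
      exact ⟨_, part2 W22star hWs u⟩
  · intro W22star hWs u
    exact part2 W22star hWs u
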